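/- The set of interdependent-choice equilibria with respect to a fixed set of credible threats B, when the worst-punishment levels are taken with respect to B ∪ (support of α) but all supports are constrained to lie in B, equals the projection onto Δ(A) of the set Γ(B) of joint distributions γ ∈ Δ(A × I) satisfying a finite system of affine inequalities, and hence is a convex compact polytope. -/

import Mathlib

open Finset

variable {A1 A2 : Type}

/-- The set of ICE distributions with respect to threat sets `B1, B2`, with supports
constrained to lie in `B` (so effective threats `B ∪ supp α = B`). -/
def iceSet [Fintype A1] [Fintype A2] (u1 u2 : A1 → A2 → ℝ)
    (B1 : Finset A1) (B2 : Finset A2) (h1 : B1.Nonempty) (h2 : B2.Nonempty) :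
    Set (A1 × A2 → ℝ) :=
  {α | (∀ a, 0 ≤ α a) ∧ (∑ a, α a = 1) ∧
    (∀ a1 a2, α (a1, a2) ≠ 0 → a1 ∈ B1 ∧ a2 ∈ B2) ∧
    ∃ θ : A1 × A2 → ℝ, (∀ a, 0 ≤ θ a ∧ θ a ≤ 1) ∧
      (∀ a1 a1', 0 ≤ ∑ a2, α (a1, a2) *
        (u1 a1 a2 - (1 - θ (a1, a2)) * u1 a1' a2
          - θ (a1, a2) * B2.inf' h2 (fun b2 => u1 a1' b2))) ∧
      (∀ a2 a2', 0 ≤ ∑ a1, α (a1, a2) *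
        (u2 a1 a2 - θ (a1, a2) * u2 a1 a2'
          - (1 - θ (a1, a2)) * B1.inf' h1 (fun b1 => u2 b1 a2')))}

/-- The polytope `Γ(B)` of joint distributions over `A × I` (`γ a 0` is the weight on
player 1 moving first at profile `a`) satisfying the affine incentive inequalities,
with supports on `A` constrained to lie in `B`. -/
def gammaSet [Fintype A1] [Fintype A2] (u1 u2 : A1 → A2 → ℝ)
    (B1 : Finset A1) (B2 : Finset A2) (h1 : B1.Nonempty) (h2 : B2.Nonempty) :
    Set (A1 × A2 → Fin 2 → ℝ) :=
  {γ | (∀ a i, 0 ≤ γ a i) ∧ (∑ a, (γ a 0 + γ a 1) = 1) ∧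
    (∀ a1 a2, γ (a1, a2) 0 + γ (a1, a2) 1 ≠ 0 → a1 ∈ B1 ∧ a2 ∈ B2) ∧
    (∀ a1 a1', 0 ≤ ∑ a2, ((γ (a1, a2) 0 + γ (a1, a2) 1) * u1 a1 a2
        - γ (a1, a2) 0 * B2.inf' h2 (fun b2 => u1 a1' b2)
        - γ (a1, a2) 1 * u1 a1' a2)) ∧
    (∀ a2 a2', 0 ≤ ∑ a1, ((γ (a1, a2) 0 + γ (a1, a2) 1) * u2 a1 a2
        - γ (a1, a2) 1 * B1.inf' h1 (fun b1 => u2 b1 a2')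
        - γ (a1, a2) 0 * u2 a1 a2'))}

/-- `ICE(B)` is exactly the projection of `Γ(B)` onto `Δ(A)`, and is a convex
compact set (a polytope cut out by finitely many affine inequalities). -/

theorem ice_eq_proj [Fintype A1] [Fintype A2]
    (u1 u2 : A1 → A2 → ℝ) (B1 : Finset A1) (B2 : Finset A2)
    (h1 : B1.Nonempty) (h2 : B2.Nonempty) :
    iceSet u1 u2 B1 B2 h1 h2 =
      {α | ∃ γ ∈ gammaSet u1 u2 B1 B2 h1 h2, ∀ a, α a = γ a 0 + γ a 1} := by
  classical
  ext α
  constructor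
  · rintro ⟨hpos, hsum, hsupp, θ, hθ, hA, hB⟩
    set γ : A1 × A2 → Fin 2 → ℝ :=
      fun a i => if i = 0 then α a * θ a else α a * (1 - θ a) with hγdef
    have g0 : ∀ a, γ a 0 = α a * θ a := fun a => if_pos rfl
    have g1 : ∀ a, γ a 1 = α a * (1 - θ a) := fun a => if_neg (by decide)
    have gsum : ∀ a, γ a 0 + γ a 1 = α a := by
      intro a; rw [g0, g1]; ring
    refine ⟨γ, ⟨?_, ?_, ?_, ?_, ?_⟩, fun a => (gsum a).symm⟩
    · intro a i
      rw [hγdef]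
      dsimp only
      split
      · exact mul_nonneg (hpos a) (hθ a).1
      · exact mul_nonneg (hpos a) (by linarith [(hθ a).2])
    · rw [Finset.sum_congr rfl fun a _ => gsum a]; exact hsum
    · intro a1 a2 h; exact hsupp a1 a2 (by rw [← gsum (a1, a2)]; exact h)
    · intro a1 a1'
      refine (hA a1 a1').trans_eq (Finset.sum_congr rfl fun a2 _ => ?_)
      rw [g0, g1]; ring
    · intro a2 a2'
      refine (hB a2 a2').trans_eq (Finset.sum_congr rfl fun a1 _ => ?_)
      rw [g0, g1]; ring
  · rintro ⟨γ, ⟨hpos, hsum, hsupp, hA, hB⟩, hαγ⟩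
    set θ : A1 × A2 → ℝ :=
      fun a => if γ a 0 + γ a 1 = 0 then 0 else γ a 0 / (γ a 0 + γ a 1) with hθdef
    have hγ0 : ∀ a, α a * θ a = γ a 0 := by
      intro a
      rw [hαγ a]
      by_cases h : γ a 0 + γ a 1 = 0
      · have h0 : γ a 0 = 0 := le_antisymm (by linarith [hpos a 1]) (hpos a 0)
        rw [h, h0, zero_mul]
      · simp only [θ, if_neg h]; field_simp
    have hγ1 : ∀ a, α a * (1 - θ a) = γ a 1 := by
      intro a
      rw [hαγ a]
      by_cases h : γ a 0 + γ a 1 = 0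
      · have h0 : γ a 1 = 0 := le_antisymm (by linarith [hpos a 0]) (hpos a 1)
        rw [h, h0, zero_mul]
      · simp only [θ, if_neg h]; field_simp; ring
    have hαnn : ∀ a, 0 ≤ α a := fun a => by
      rw [hαγ a]; exact add_nonneg (hpos a 0) (hpos a 1)
    refine ⟨hαnn, ?_, ?_, θ, ?_, ?_, ?_⟩
    · rw [← hsum]; exact Finset.sum_congr rfl fun a _ => hαγ a
    · intro a1 a2 h
      exact hsupp a1 a2 (by rw [← hαγ (a1, a2)]; exact h)
    · intro a
      by_cases h : γ a 0 + γ a 1 = 0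
      · simp [θ, h]
      · have hlt : 0 < γ a 0 + γ a 1 :=
          lt_of_le_of_ne (add_nonneg (hpos a 0) (hpos a 1)) (Ne.symm h)
        constructor
        · simp only [θ, if_neg h]; exact div_nonneg (hpos a 0) hlt.le
        · simp only [θ, if_neg h]
          exact div_le_one_of_le₀ (by linarith [hpos a 1]) hlt.le
    · intro a1 a1'
      refine (hA a1 a1').trans_eq (Finset.sum_congr rfl fun a2 _ => ?_)
      rw [hαγ (a1, a2), ← hγ0 (a1, a2), ← hγ1 (a1, a2), hαγ (a1, a2)]
      ring
    · intro a2 a2'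
      refine (hB a2 a2').trans_eq (Finset.sum_congr rfl fun a1 _ => ?_)
      rw [hαγ (a1, a2), ← hγ0 (a1, a2), ← hγ1 (a1, a2), hαγ (a1, a2)]
      ring

theorem gamma_convex [Fintype A1] [Fintype A2]
    (u1 u2 : A1 → A2 → ℝ) (B1 : Finset A1) (B2 : Finset A2)
    (h1 : B1.Nonempty) (h2 : B2.Nonempty) :
    Convex ℝ (gammaSet u1 u2 B1 B2 h1 h2) := by
  rintro γ ⟨hpos, hsum, hsupp, hA, hB⟩ γ' ⟨hpos', hsum', hsupp', hA', hB'⟩ t s ht hs hts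
  have happ : ∀ a i, (t • γ + s • γ') a i = t * γ a i + s * γ' a i := by
    intro a i; simp [Pi.add_apply, Pi.smul_apply, smul_eq_mul]
  refine ⟨?_, ?_, ?_, ?_, ?_⟩
  · intro a i
    rw [happ]
    exact add_nonneg (mul_nonneg ht (hpos a i)) (mul_nonneg hs (hpos' a i))
  · have : ∀ a : A1 × A2, (t • γ + s • γ') a 0 + (t • γ + s • γ') a 1
        = t * (γ a 0 + γ a 1) + s * (γ' a 0 + γ' a 1) := by
      intro a; rw [happ, happ]; ring
    rw [Finset.sum_congr rfl fun a _ => this a, Finset.sum_add_distrib,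
      ← Finset.mul_sum, ← Finset.mul_sum, hsum, hsum']
    linarith
  · intro a1 a2 h
    rw [happ, happ] at h
    by_cases hg : γ (a1, a2) 0 + γ (a1, a2) 1 = 0
    · by_cases hg' : γ' (a1, a2) 0 + γ' (a1, a2) 1 = 0
      · exfalso; apply h; nlinarith
      · exact hsupp' a1 a2 hg'
    · exact hsupp a1 a2 hg
  · intro a1 a1'
    have key : ∀ a2 : A2,
        (((t • γ + s • γ') (a1, a2) 0 + (t • γ + s • γ') (a1, a2) 1) * u1 a1 a2
          - (t • γ + s • γ') (a1, a2) 0 * B2.inf' h2 (fun b2 => u1 a1' b2)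
          - (t • γ + s • γ') (a1, a2) 1 * u1 a1' a2)
        = t * ((γ (a1, a2) 0 + γ (a1, a2) 1) * u1 a1 a2
            - γ (a1, a2) 0 * B2.inf' h2 (fun b2 => u1 a1' b2)
            - γ (a1, a2) 1 * u1 a1' a2)
          + s * ((γ' (a1, a2) 0 + γ' (a1, a2) 1) * u1 a1 a2
            - γ' (a1, a2) 0 * B2.inf' h2 (fun b2 => u1 a1' b2)
            - γ' (a1, a2) 1 * u1 a1' a2) := by
      intro a2; rw [happ, happ]; ring
    rw [Finset.sum_congr rfl fun a2 _ => key a2, Finset.sum_add_distrib,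
      ← Finset.mul_sum, ← Finset.mul_sum]
    exact add_nonneg (mul_nonneg ht (hA a1 a1')) (mul_nonneg hs (hA' a1 a1'))
  · intro a2 a2'
    have key : ∀ a1 : A1,
        (((t • γ + s • γ') (a1, a2) 0 + (t • γ + s • γ') (a1, a2) 1) * u2 a1 a2
          - (t • γ + s • γ') (a1, a2) 1 * B1.inf' h1 (fun b1 => u2 b1 a2')
          - (t • γ + s • γ') (a1, a2) 0 * u2 a1 a2')
        = t * ((γ (a1, a2) 0 + γ (a1, a2) 1) * u2 a1 a2
            - γ (a1, a2) 1 * B1.inf' h1 (fun b1 => u2 b1 a2')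
            - γ (a1, a2) 0 * u2 a1 a2')
          + s * ((γ' (a1, a2) 0 + γ' (a1, a2) 1) * u2 a1 a2
            - γ' (a1, a2) 1 * B1.inf' h1 (fun b1 => u2 b1 a2')
            - γ' (a1, a2) 0 * u2 a1 a2') := by
      intro a1; rw [happ, happ]; ring
    rw [Finset.sum_congr rfl fun a1 _ => key a1, Finset.sum_add_distrib,
      ← Finset.mul_sum, ← Finset.mul_sum]
    exact add_nonneg (mul_nonneg ht (hB a2 a2')) (mul_nonneg hs (hB' a2 a2'))

theorem gamma_compact [Fintype A1] [Fintype A2]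
    (u1 u2 : A1 → A2 → ℝ) (B1 : Finset A1) (B2 : Finset A2)
    (h1 : B1.Nonempty) (h2 : B2.Nonempty) :
    IsCompact (gammaSet u1 u2 B1 B2 h1 h2) := by
  classical
  have hsub : gammaSet u1 u2 B1 B2 h1 h2 ⊆ Set.pi Set.univ (fun _ : A1 × A2 =>
      Set.pi Set.univ fun _ : Fin 2 => Set.Icc (0:ℝ) 1) := by
    rintro γ hγ
    obtain ⟨hpos, hsum, -, -, -⟩ := hγ
    intro a _ 
    intro i _
    refine ⟨hpos a i, ?_⟩
    have hle : γ a 0 + γ a 1 ≤ 1 := by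
      rw [← hsum]
      exact Finset.single_le_sum
        (fun b _ => add_nonneg (hpos b 0) (hpos b 1)) (Finset.mem_univ a)
    have h0 : i = 0 ∨ i = 1 := by omega
    rcases h0 with rfl | rfl
    · linarith [hpos a 1]
    · linarith [hpos a 0]
  have hKc : IsCompact (Set.pi Set.univ (fun _ : A1 × A2 =>
      Set.pi Set.univ fun _ : Fin 2 => Set.Icc (0:ℝ) 1)) :=
    isCompact_univ_pi fun _ => isCompact_univ_pi fun _ => isCompact_Icc
  have hclosed : IsClosed (gammaSet u1 u2 B1 B2 h1 h2) := by
    have e : {γ : A1 × A2 → Fin 2 → ℝ | (∀ a i, 0 ≤ γ a i) ∧ (∑ a, (γ a 0 + γ a 1) = 1) ∧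
      (∀ a1 a2, γ (a1, a2) 0 + γ (a1, a2) 1 ≠ 0 → a1 ∈ B1 ∧ a2 ∈ B2) ∧
      (∀ a1 a1', 0 ≤ ∑ a2, ((γ (a1, a2) 0 + γ (a1, a2) 1) * u1 a1 a2
          - γ (a1, a2) 0 * B2.inf' h2 (fun b2 => u1 a1' b2)
          - γ (a1, a2) 1 * u1 a1' a2)) ∧
      (∀ a2 a2', 0 ≤ ∑ a1, ((γ (a1, a2) 0 + γ (a1, a2) 1) * u2 a1 a2
          - γ (a1, a2) 1 * B1.inf' h1 (fun b1 => u2 b1 a2')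
          - γ (a1, a2) 0 * u2 a1 a2'))}
      = (⋂ a, ⋂ i, {γ : A1 × A2 → Fin 2 → ℝ | 0 ≤ γ a i}) ∩
        ({γ : A1 × A2 → Fin 2 → ℝ | ∑ a, (γ a 0 + γ a 1) = 1}) ∩
        (⋂ a1, ⋂ a2, {γ : A1 × A2 → Fin 2 → ℝ |
          γ (a1, a2) 0 + γ (a1, a2) 1 ≠ 0 → a1 ∈ B1 ∧ a2 ∈ B2}) ∩
        (⋂ a1, ⋂ a1', {γ : A1 × A2 → Fin 2 → ℝ |
          0 ≤ ∑ a2, ((γ (a1, a2) 0 + γ (a1, a2) 1) * u1 a1 a2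
            - γ (a1, a2) 0 * B2.inf' h2 (fun b2 => u1 a1' b2)
            - γ (a1, a2) 1 * u1 a1' a2)}) ∩
        (⋂ a2, ⋂ a2', {γ : A1 × A2 → Fin 2 → ℝ |
          0 ≤ ∑ a1, ((γ (a1, a2) 0 + γ (a1, a2) 1) * u2 a1 a2
            - γ (a1, a2) 1 * B1.inf' h1 (fun b1 => u2 b1 a2')
            - γ (a1, a2) 0 * u2 a1 a2')}) := by
      ext γ
      simp only [Set.mem_setOf_eq, Set.mem_inter_iff, Set.mem_iInter]
      tauto
    rw [show gammaSet u1 u2 B1 B2 h1 h2 = _ from rfl, gammaSet, e]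
    have c1 : ∀ (a : A1 × A2) (i : Fin 2),
        Continuous fun γ : A1 × A2 → Fin 2 → ℝ => γ a i :=
      fun a i => (continuous_apply i).comp (continuous_apply a)
    refine (((((isClosed_iInter fun a => isClosed_iInter fun i =>
        isClosed_le continuous_const (c1 a i))).inter
        (isClosed_eq (by fun_prop) continuous_const)).inter
        (isClosed_iInter fun a1 => isClosed_iInter fun a2 => ?_)).inter
        (isClosed_iInter fun a1 => isClosed_iInter fun a1' =>
          isClosed_le continuous_const (by fun_prop))).inter
        (isClosed_iInter fun a2 => isClosed_iInter fun a2' =>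
          isClosed_le continuous_const (by fun_prop))
    by_cases hmem : a1 ∈ B1 ∧ a2 ∈ B2
    · have : {γ : A1 × A2 → Fin 2 → ℝ |
          γ (a1, a2) 0 + γ (a1, a2) 1 ≠ 0 → a1 ∈ B1 ∧ a2 ∈ B2} = Set.univ := by
        ext γ; simp [hmem]
      rw [this]; exact isClosed_univ
    · have : {γ : A1 × A2 → Fin 2 → ℝ |
          γ (a1, a2) 0 + γ (a1, a2) 1 ≠ 0 → a1 ∈ B1 ∧ a2 ∈ B2}
          = {γ : A1 × A2 → Fin 2 → ℝ | γ (a1, a2) 0 + γ (a1, a2) 1 = 0} := by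
        ext γ
        simp only [Set.mem_setOf_eq]
        constructor
        · intro h; by_contra hc; exact hmem (h hc)
        · intro h hc; exact absurd h hc
      rw [this]
      exact isClosed_eq (by fun_prop) continuous_const
  exact hKc.of_isClosed_subset hclosed hsub

theorem stmt3 [Fintype A1] [Fintype A2] [Nonempty A1] [Nonempty A2]
    (u1 u2 : A1 → A2 → ℝ) (B1 : Finset A1) (B2 : Finset A2)
    (h1 : B1.Nonempty) (h2 : B2.Nonempty) :
    iceSet u1 u2 B1 B2 h1 h2 =
      {α | ∃ γ ∈ gammaSet u1 u2 B1 B2 h1 h2, ∀ a, α a = γ a 0 + γ a 1} ∧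
    Convex ℝ (iceSet u1 u2 B1 B2 h1 h2) ∧
    IsCompact (iceSet u1 u2 B1 B2 h1 h2) := by
  classical
  have key := ice_eq_proj u1 u2 B1 B2 h1 h2
  have hconv := gamma_convex u1 u2 B1 B2 h1 h2
  have hcomp := gamma_compact u1 u2 B1 B2 h1 h2
  refine ⟨key, ?_, ?_⟩
  · rw [key]
    rintro α ⟨γ, hγ, hαγ⟩ α' ⟨γ', hγ', hαγ'⟩ t s ht hs hts
    refine ⟨t • γ + s • γ', hconv hγ hγ' ht hs hts, fun a => ?_⟩
    have h1' : (t • α + s • α') a = t * α a + s * α' a := by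
      simp [smul_eq_mul]
    have h2' : ∀ i, (t • γ + s • γ') a i = t * γ a i + s * γ' a i := by
      intro i; simp [smul_eq_mul]
    rw [h1', h2', h2', hαγ a, hαγ' a]; ring
  · have himg : iceSet u1 u2 B1 B2 h1 h2 =
        (fun γ (a : A1 × A2) => γ a 0 + γ a 1) '' gammaSet u1 u2 B1 B2 h1 h2 := by
      rw [key]
      ext α
      constructor
      · rintro ⟨γ, hγ, hα⟩
        exact ⟨γ, hγ, funext fun a => (hα a).symm⟩
      · rintro ⟨γ, hγ, hα⟩
        exact ⟨γ, hγ, fun a => by rw [← hα]⟩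
    rw [himg]
    exact hcomp.image (by fun_prop)
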